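/- arXiv:2510.18983 — 2 statements merged into one kernel-verified Lean document; each statement's English description precedes it below -/
import Mathlib

section
/- In a Sinai billiard with finite horizon (minimum free-flight time τ_min > 0), for each T > 0 the number of periodic orbits of the billiard flow with period at most T is finite. -/
/-- In a Sinai billiard with finite horizon, for each `T > 0` the set of periodic
points of the billiard map whose orbit under the billiard flow has period (total
flight time) at most `T` is finite.  The billiard is encoded abstractly: `f` is the
billiard map on the collision space `M`, `τ` the free-flight time bounded below by
`τmin > 0`, and `iota` an injective symbolic coding into `A^ℤ` with
`A = ℤ² × {1,…,k}`, shift-equivariant up to a `ℤ²`-translation, starting in the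
fundamental cell `(0,0)`, and changing the `ℤ²`-label by at most `Kb` at each step. -/
theorem finitely_many_periodic_orbits
    {M : Type*} (k : ℕ) (f : M → M) (iota : M → ℤ → (ℤ × ℤ) × Fin k)
    (τ : M → ℝ) (τmin : ℝ) (hτmin : 0 < τmin) (hτ : ∀ x, τmin ≤ τ x)
    (hinj : Function.Injective iota)
    (hshift : ∀ x : M, ∃ t : ℤ × ℤ, ∀ i : ℤ,
      iota (f x) i =
        (((iota x (i + 1)).1.1 + t.1, (iota x (i + 1)).1.2 + t.2), (iota x (i + 1)).2))
    (hzero : ∀ x : M, (iota x 0).1 = (0, 0))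
    (Kb : ℕ) (hstep : ∀ x : M, ∀ p : ℤ,
      |(iota x (p + 1)).1.1 - (iota x p).1.1| +
        |(iota x (p + 1)).1.2 - (iota x p).1.2| ≤ (Kb : ℤ))
    (T : ℝ) (hT : 0 < T) :
    Set.Finite {x : M | ∃ q : ℕ, 1 ≤ q ∧ f^[q] x = x ∧
      (∑ p ∈ Finset.range q, τ (f^[p] x)) ≤ T} := by
  classical
  set P : M → ℕ → Prop := fun x q => 1 ≤ q ∧ f^[q] x = x ∧
      (∑ p ∈ Finset.range q, τ (f^[p] x)) ≤ T with hP
  set Q : ℕ := ⌈T / τmin⌉₊ with hQdef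
  set B : ℤ := (Kb : ℤ) * Q with hBdef
  -- the chosen period of a (pre-)periodic point
  set qx : M → ℕ := fun x => if h : ∃ q, P x q then Nat.find h else 1 with hqx
  -- the chosen period satisfies the defining property
  have hqspec : ∀ x : M, (∃ q, P x q) → P x (qx x) := by
    intro x hx
    have : qx x = Nat.find hx := by rw [hqx]; exact dif_pos hx
    rw [this]; exact Nat.find_spec hx
  -- the chosen period is at most Q
  have hqle : ∀ x : M, (∃ q, P x q) → qx x ≤ Q := by
    intro x hx
    obtain ⟨hq1, hper, hsum⟩ := hqspec x hx
    have h1 : (qx x : ℝ) * τmin ≤ T := by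
      calc (qx x : ℝ) * τmin = ∑ _p ∈ Finset.range (qx x), τmin := by
              rw [Finset.sum_const, Finset.card_range, nsmul_eq_mul]
        _ ≤ ∑ p ∈ Finset.range (qx x), τ (f^[p] x) :=
              Finset.sum_le_sum fun p _ => hτ _
        _ ≤ T := hsum
    have h2 : (qx x : ℝ) ≤ T / τmin := (le_div_iff₀ hτmin).2 h1
    calc qx x = ⌈(qx x : ℝ)⌉₊ := (Nat.ceil_natCast _).symm
      _ ≤ Q := Nat.ceil_mono h2
  -- coordinate bound along the coding sequence
  have hbound : ∀ (x : M) (n : ℕ),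
      |(iota x (n : ℤ)).1.1| + |(iota x (n : ℤ)).1.2| ≤ (Kb : ℤ) * n := by
    intro x n
    induction n with
    | zero =>
        have h0 := hzero x
        have h1 : (iota x (0 : ℤ)).1.1 = 0 := by rw [h0]
        have h2 : (iota x (0 : ℤ)).1.2 = 0 := by rw [h0]
        simp [h1, h2]
    | succ n ih =>
        have hs := hstep x (n : ℤ)
        have e : ((n + 1 : ℕ) : ℤ) = (n : ℤ) + 1 := by push_cast; ring
        rw [e]
        have t1 : |(iota x ((n : ℤ) + 1)).1.1| ≤
            |(iota x ((n : ℤ) + 1)).1.1 - (iota x (n : ℤ)).1.1| + |(iota x (n : ℤ)).1.1| := by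
          have := abs_sub_abs_le_abs_sub (iota x ((n : ℤ) + 1)).1.1 (iota x (n : ℤ)).1.1
          omega
        have t2 : |(iota x ((n : ℤ) + 1)).1.2| ≤
            |(iota x ((n : ℤ) + 1)).1.2 - (iota x (n : ℤ)).1.2| + |(iota x (n : ℤ)).1.2| := by
          have := abs_sub_abs_le_abs_sub (iota x ((n : ℤ) + 1)).1.2 (iota x (n : ℤ)).1.2
          omega
        have := ih
        push_cast
        nlinarith [this, hs, t1, t2]
  -- iterated shift relation
  have hiter : ∀ (x : M) (n : ℕ), ∃ t : ℤ × ℤ, ∀ i : ℤ,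
      iota (f^[n] x) i =
        (((iota x (i + (n : ℤ))).1.1 + t.1, (iota x (i + (n : ℤ))).1.2 + t.2),
          (iota x (i + (n : ℤ))).2) := by
    intro x n
    induction n with
    | zero => exact ⟨(0, 0), fun i => by simp⟩
    | succ n ih =>
        obtain ⟨t, ht⟩ := ih
        obtain ⟨s, hs⟩ := hshift (f^[n] x)
        refine ⟨(t.1 + s.1, t.2 + s.2), fun i => ?_⟩
        rw [Function.iterate_succ_apply', hs i, ht (i + 1)]
        have e : i + 1 + (n : ℤ) = i + ((n + 1 : ℕ) : ℤ) := by push_cast; ring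
        rw [e]
        simp only [Prod.mk.injEq]
        refine ⟨⟨by ring, by ring⟩, by simp⟩
  -- the key reconstruction lemma: for a q-periodic point z the whole coding
  -- sequence is determined by its values on [0, q]
  have hrecon : ∀ (z : M) (q : ℕ), 1 ≤ q → f^[q] z = z → ∀ m i : ℤ,
      (iota z (i + m * (q : ℤ))).1.1 = (iota z i).1.1 + m * (iota z (q : ℤ)).1.1 ∧
      (iota z (i + m * (q : ℤ))).1.2 = (iota z i).1.2 + m * (iota z (q : ℤ)).1.2 ∧
      (iota z (i + m * (q : ℤ))).2 = (iota z i).2 := by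
    intro z q hq1 hper
    obtain ⟨t, ht⟩ := hiter z q
    rw [hper] at ht
    -- determine t from the value at 0
    have ht0 := ht 0
    have h00 : (iota z (0 : ℤ)).1 = (0, 0) := hzero z
    have hz1 : (iota z (0 : ℤ)).1.1 = 0 := by rw [h00]
    have hz2 : (iota z (0 : ℤ)).1.2 = 0 := by rw [h00]
    have ht01 : (iota z (0 : ℤ)).1.1 = (iota z ((0 : ℤ) + (q : ℤ))).1.1 + t.1 :=
      congrArg (fun p => p.1.1) ht0
    have ht02 : (iota z (0 : ℤ)).1.2 = (iota z ((0 : ℤ) + (q : ℤ))).1.2 + t.2 :=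
      congrArg (fun p => p.1.2) ht0
    have e0 : (0 : ℤ) + (q : ℤ) = (q : ℤ) := by ring
    rw [e0, hz1] at ht01
    rw [e0, hz2] at ht02
    have hA1 : ∀ i : ℤ, (iota z (i + (q : ℤ))).1.1 = (iota z i).1.1 + (iota z (q : ℤ)).1.1 := by
      intro i
      have := congrArg (fun p => p.1.1) (ht i)
      simp only at this
      omega
    have hA2 : ∀ i : ℤ, (iota z (i + (q : ℤ))).1.2 = (iota z i).1.2 + (iota z (q : ℤ)).1.2 := by
      intro i
      have := congrArg (fun p => p.1.2) (ht i)
      simp only at this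
      omega
    have hA3 : ∀ i : ℤ, (iota z (i + (q : ℤ))).2 = (iota z i).2 := by
      intro i
      exact (congrArg (fun p => p.2) (ht i)).symm
    intro m
    induction m using Int.induction_on with
    | zero => intro i; simp
    | succ m ih =>
        intro i
        have e : i + ((m : ℤ) + 1) * (q : ℤ) = (i + m * q) + q := by ring
        rw [e]
        obtain ⟨ih1, ih2, ih3⟩ := ih i
        refine ⟨?_, ?_, ?_⟩
        · rw [hA1 (i + m * q), ih1]; ring
        · rw [hA2 (i + m * q), ih2]; ring
        · rw [hA3 (i + m * q), ih3]
    | pred m ih =>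
        intro i
        obtain ⟨ih1, ih2, ih3⟩ := ih i
        have e : (i + (-(m : ℤ) - 1) * q) + q = i + (-(m : ℤ)) * q := by ring
        have g1 := hA1 (i + (-(m : ℤ) - 1) * q)
        have g2 := hA2 (i + (-(m : ℤ) - 1) * q)
        have g3 := hA3 (i + (-(m : ℤ) - 1) * q)
        rw [e] at g1 g2 g3
        refine ⟨?_, ?_, ?_⟩
        · have : (iota z (i + (-(m : ℤ) - 1) * q)).1.1
              = (iota z (i + (-(m : ℤ)) * q)).1.1 - (iota z (q : ℤ)).1.1 := by omega
          rw [this, ih1]; ring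
        · have : (iota z (i + (-(m : ℤ) - 1) * q)).1.2
              = (iota z (i + (-(m : ℤ)) * q)).1.2 - (iota z (q : ℤ)).1.2 := by omega
          rw [this, ih2]; ring
        · rw [← g3, ih3]
  -- the encoding map into a finite type
  have memB : ∀ (x : M) (j : Fin (Q + 1)), (iota x ((j : ℕ) : ℤ)).1.1 ∈ Set.Icc (-B) B ∧
      (iota x ((j : ℕ) : ℤ)).1.2 ∈ Set.Icc (-B) B := by
    intro x j
    have hb := hbound x (j : ℕ)
    have hj : ((j : ℕ) : ℤ) ≤ (Q : ℤ) := by exact_mod_cast Nat.le_of_lt_succ j.isLt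
    have hKb : (Kb : ℤ) * (j : ℕ) ≤ B := by
      rw [hBdef]
      have : (0 : ℤ) ≤ (Kb : ℤ) := Int.natCast_nonneg Kb
      nlinarith
    have u1 := le_abs_self (iota x ((j : ℕ) : ℤ)).1.1
    have u2 := neg_abs_le (iota x ((j : ℕ) : ℤ)).1.1
    have u3 := le_abs_self (iota x ((j : ℕ) : ℤ)).1.2
    have u4 := neg_abs_le (iota x ((j : ℕ) : ℤ)).1.2
    have a1 := abs_nonneg (iota x ((j : ℕ) : ℤ)).1.1
    have a2 := abs_nonneg (iota x ((j : ℕ) : ℤ)).1.2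
    constructor <;> · simp only [Set.mem_Icc]; omega
  set Φ : M → Fin (Q + 1) × (Fin (Q + 1) → (Set.Icc (-B) B) × (Set.Icc (-B) B) × Fin k) :=
    fun x => (⟨min (qx x) Q, by omega⟩,
      fun j => (⟨(iota x ((j : ℕ) : ℤ)).1.1, (memB x j).1⟩,
        ⟨(iota x ((j : ℕ) : ℤ)).1.2, (memB x j).2⟩, (iota x ((j : ℕ) : ℤ)).2)) with hΦ
  apply Set.Finite.of_finite_image (f := Φ) (Set.toFinite _)
  -- injectivity of Φ on the set
  intro x hx y hy hxy
  simp only [Set.mem_setOf_eq] at hx hy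
  have hxP : ∃ q, P x q := hx
  have hyP : ∃ q, P y q := hy
  have hqxle := hqle x hxP
  have hqyle := hqle y hyP
  -- equal periods
  have h1 : min (qx x) Q = min (qx y) Q := by
    have := congrArg (fun p => (p.1 : ℕ)) hxy
    simpa [hΦ] using this
  have hq : qx x = qx y := by omega
  set q : ℕ := qx x with hqdef
  obtain ⟨hq1, hperx, -⟩ := hqspec x hxP
  obtain ⟨hq1', hpery, -⟩ := hqspec y hyP
  rw [← hq] at hpery
  -- window agreement
  have hwin : ∀ n : ℕ, n ≤ Q → iota x ((n : ℕ) : ℤ) = iota y ((n : ℕ) : ℤ) := by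
    intro n hn
    have hj := congrFun (congrArg Prod.snd hxy) ⟨n, by omega⟩
    simp only [hΦ, Prod.mk.injEq, Subtype.mk.injEq] at hj
    obtain ⟨e1, e2, e3⟩ := hj
    have : (iota x ((n : ℕ) : ℤ)).1 = (iota y ((n : ℕ) : ℤ)).1 := Prod.ext e1 e2
    exact Prod.ext this e3
  -- full agreement of codings
  have hall : ∀ i : ℤ, iota x i = iota y i := by
    intro i
    have hq0 : (0 : ℤ) < (q : ℤ) := by exact_mod_cast hq1
    have hr0 : 0 ≤ i % (q : ℤ) := Int.emod_nonneg i (by omega)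
    have hrq : i % (q : ℤ) < (q : ℤ) := Int.emod_lt_of_pos i hq0
    set r : ℤ := i % (q : ℤ) with hrdef
    set m : ℤ := i / (q : ℤ) with hmdef
    have hi : r + m * (q : ℤ) = i := by
      have h := Int.emod_add_mul_ediv i (q : ℤ)
      have hc : (q : ℤ) * m = m * (q : ℤ) := mul_comm _ _
      linarith
    obtain ⟨gx1, gx2, gx3⟩ := hrecon x q hq1 hperx m r
    obtain ⟨gy1, gy2, gy3⟩ := hrecon y q hq1 hpery m r
    rw [hi] at gx1 gx2 gx3 gy1 gy2 gy3
    have hrnat : ((r.toNat : ℕ) : ℤ) = r := by omega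
    have hqQ : (q : ℤ) ≤ (Q : ℤ) := by exact_mod_cast hqxle
    have hrle : r.toNat ≤ Q := by omega
    have hwr : iota x r = iota y r := by
      have := hwin r.toNat hrle
      rwa [hrnat] at this
    have hwq : iota x ((q : ℕ) : ℤ) = iota y ((q : ℕ) : ℤ) := hwin q hqxle
    have c1 : (iota x i).1.1 = (iota y i).1.1 := by
      rw [gx1, gy1, hwr, hwq]
    have c2 : (iota x i).1.2 = (iota y i).1.2 := by
      rw [gx2, gy2, hwr, hwq]
    have c3 : (iota x i).2 = (iota y i).2 := by
      rw [gx3, gy3, hwr]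
    exact Prod.ext (Prod.ext c1 c2) c3
  exact hinj (funext hall)
end

section
/- Let L : ℝ^{q+1} → ℝ be a C² function whose Hessian at a point is a symmetric tridiagonal matrix with entries ∂_{00}L = cos²φ₀/τ₀ + K₀ cos φ₀, ∂_{jj}L = (1/τ_{j-1} + 1/τ_j) cos²φ_j + 2K_j cos φ_j for 0 < j < q, ∂_{qq}L = cos²φ_q/τ_{q-1} + K_q cos φ_q, and ∂_{j,j+1}L = cos φ_j cos φ_{j+1}/τ_j, where all τ_j > 0, K_j > 0 and φ_j ∈ (−π/2, π/2). Then this Hessian matrix is positive definite. -/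
open Real

/-- Collapse of a symmetric tridiagonal quadratic form. -/
lemma tri_sum (n : ℕ) (G : ℕ → ℕ → ℝ) (x : ℕ → ℝ)
    (hz : ∀ i j, i + 1 < j → G i j = 0) (hs : ∀ i j, G i j = G j i) :
    ∑ i ∈ Finset.range n, ∑ j ∈ Finset.range n, x i * G i j * x j
      = ∑ i ∈ Finset.range n, G i i * x i ^ 2
        + 2 * ∑ i ∈ Finset.range (n - 1), G i (i + 1) * x i * x (i + 1) := by
  induction n with
  | zero => simp
  | succ n ih =>
    rcases Nat.eq_zero_or_pos n with rfl | hn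
    · simp [sq]; ring
    · obtain ⟨m, rfl⟩ := Nat.exists_eq_succ_of_ne_zero hn.ne'
      have hA : ∑ i ∈ Finset.range (m + 1), x i * G i (m + 1) * x (m + 1)
          = x m * G m (m + 1) * x (m + 1) := by
        apply Finset.sum_eq_single_of_mem m (Finset.self_mem_range_succ m)
        intro b hb hbne
        have hb' : b < m + 1 := Finset.mem_range.mp hb
        have : b + 1 < m + 1 := by omega
        rw [hz b (m + 1) this]; ring
      have hB : ∑ j ∈ Finset.range (m + 1), x (m + 1) * G (m + 1) j * x j
          = x (m + 1) * G (m + 1) m * x m := by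
        apply Finset.sum_eq_single_of_mem m (Finset.self_mem_range_succ m)
        intro b hb hbne
        have hb' : b < m + 1 := Finset.mem_range.mp hb
        have hb1 : b + 1 < m + 1 := by omega
        rw [hs (m + 1) b, hz b (m + 1) hb1]; ring
      rw [Finset.sum_range_succ (fun i =>
        ∑ j ∈ Finset.range (m + 1 + 1), x i * G i j * x j) (m + 1)]
      have inner : ∀ i, ∑ j ∈ Finset.range (m + 1 + 1), x i * G i j * x j
          = (∑ j ∈ Finset.range (m + 1), x i * G i j * x j)
            + x i * G i (m + 1) * x (m + 1) := fun i =>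
        Finset.sum_range_succ (fun j => x i * G i j * x j) (m + 1)
      simp_rw [inner]
      rw [Finset.sum_add_distrib, ih, hA, hB,
        Finset.sum_range_succ (fun i => G i i * x i ^ 2) (m + 1)]
      simp only [Nat.add_sub_cancel, Nat.succ_sub_one]
      rw [Finset.sum_range_succ (fun i => G i (i + 1) * x i * x (i + 1)) m,
        hs (m + 1) m]
      ring

/-- Completing the square for a tridiagonal form with vanishing boundary weights. -/
lemma square_sum (n : ℕ) (A u : ℕ → ℝ) (h0 : A 0 = 0) (hn : A (n + 1) = 0) :
    ∑ j ∈ Finset.range n, A (j + 1) * (u j + u (j + 1)) ^ 2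
      = ∑ i ∈ Finset.range (n + 1), (A i + A (i + 1)) * u i ^ 2
        + 2 * ∑ j ∈ Finset.range n, A (j + 1) * u j * u (j + 1) := by
  have e1 : ∑ i ∈ Finset.range (n + 1), (A i + A (i + 1)) * u i ^ 2
      = ∑ j ∈ Finset.range n, A (j + 1) * u (j + 1) ^ 2
        + ∑ j ∈ Finset.range n, A (j + 1) * u j ^ 2 := by
    simp_rw [add_mul]
    rw [Finset.sum_add_distrib,
      Finset.sum_range_succ' (fun i => A i * u i ^ 2) n,
      Finset.sum_range_succ (fun i => A (i + 1) * u i ^ 2) n, h0, hn]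
    ring
  rw [e1, Finset.mul_sum, ← Finset.sum_add_distrib, ← Finset.sum_add_distrib]
  apply Finset.sum_congr rfl
  intro j _
  ring

/-- The Hessian of the length functional of a periodic billiard orbit in a dispersing
billiard — a symmetric tridiagonal matrix with diagonal entries
`cos²φ₀/τ₀ + K₀ cos φ₀`, `(1/τ_{j-1} + 1/τ_j) cos²φ_j + 2K_j cos φ_j`,
`cos²φ_q/τ_{q-1} + K_q cos φ_q` and off-diagonal entries
`cos φ_j cos φ_{j+1} / τ_j`, where `τ_j > 0`, `K_j > 0`,
`φ_j ∈ (-π/2, π/2)` — is positive definite. -/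
theorem billiard_hessian_posDef (q : ℕ) (hq : 1 ≤ q)
    (τ φ κ : ℕ → ℝ)
    (hτ : ∀ j, j < q → 0 < τ j)
    (hκ : ∀ j, j ≤ q → 0 < κ j)
    (hφ : ∀ j, j ≤ q → φ j ∈ Set.Ioo (-(π / 2)) (π / 2))
    (H : Matrix (Fin (q + 1)) (Fin (q + 1)) ℝ)
    (hsymm : H.IsSymm)
    (h00 : H 0 0 = Real.cos (φ 0) ^ 2 / τ 0 + κ 0 * Real.cos (φ 0))
    (hjj : ∀ i : Fin (q + 1), 0 < (i : ℕ) → (i : ℕ) < q →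
      H i i = (1 / τ ((i : ℕ) - 1) + 1 / τ (i : ℕ)) * Real.cos (φ (i : ℕ)) ^ 2
        + 2 * κ (i : ℕ) * Real.cos (φ (i : ℕ)))
    (hqq : H (Fin.last q) (Fin.last q)
      = Real.cos (φ q) ^ 2 / τ (q - 1) + κ q * Real.cos (φ q))
    (hoff : ∀ i j : Fin (q + 1), (j : ℕ) = (i : ℕ) + 1 →
      H i j = Real.cos (φ (i : ℕ)) * Real.cos (φ (j : ℕ)) / τ (i : ℕ))
    (hzero : ∀ i j : Fin (q + 1), (i : ℕ) + 1 < (j : ℕ) → H i j = 0) :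
    H.PosDef := by
  -- cosines are positive
  set e : ℕ → ℝ := fun j => Real.cos (φ j) with he
  have he_pos : ∀ j, j ≤ q → 0 < e j := fun j hj =>
    Real.cos_pos_of_mem_Ioo (hφ j hj)
  rw [Matrix.posDef_iff_dotProduct_mulVec]
  constructor
  · -- Hermitian
    ext i j
    simpa [Matrix.conjTranspose_apply] using hsymm.apply i j
  intro x hx
  -- extended vector and matrix on ℕ
  set X : ℕ → ℝ := fun j => if h : j < q + 1 then x ⟨j, h⟩ else 0 with hX
  set G : ℕ → ℕ → ℝ := fun i j =>
    if hi : i < q + 1 then if hj : j < q + 1 then H ⟨i, hi⟩ ⟨j, hj⟩ else 0 else 0 with hG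
  set A : ℕ → ℝ := fun j => if 1 ≤ j ∧ j ≤ q then 1 / τ (j - 1) else 0 with hAdef
  have hA0 : A 0 = 0 := by simp [hAdef]
  have hAq : A (q + 1) = 0 := by simp [hAdef]
  have hAval : ∀ j, j < q → A (j + 1) = 1 / τ j := by
    intro j hj
    simp [hAdef, Nat.succ_le_succ, hj, Nat.succ_le_iff]
  have hA_nonneg : ∀ j, 0 ≤ A j := by
    intro j
    by_cases h : 1 ≤ j ∧ j ≤ q
    · have h1 : 0 < τ (j - 1) := hτ _ (by omega)
      simp only [hAdef, if_pos h]
      positivity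
    · simp [hAdef, h]
  -- zero / symmetry of G
  have hGz : ∀ i j, i + 1 < j → G i j = 0 := by
    intro i j hij
    simp only [hG]
    split_ifs with hi hj
    · exact hzero ⟨i, hi⟩ ⟨j, hj⟩ hij
    · rfl
    · rfl
  have hGs : ∀ i j, G i j = G j i := by
    intro i j
    simp only [hG]
    split_ifs with hi hj hj
    · exact (hsymm.apply ⟨i, hi⟩ ⟨j, hj⟩).symm
    · rfl
    · rfl
    · rfl
  -- off-diagonal values
  have hGoff : ∀ j, j < q → G j (j + 1) = A (j + 1) * (e j * e (j + 1)) := by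
    intro j hj
    have hj1 : j < q + 1 := by omega
    have hj2 : j + 1 < q + 1 := by omega
    have := hoff ⟨j, hj1⟩ ⟨j + 1, hj2⟩ rfl
    simp only [hG, dif_pos hj1, dif_pos hj2]
    rw [this, hAval j hj]
    simp only [he]
    ring
  -- diagonal lower bound
  have hGdiag : ∀ i, i ≤ q →
      (A i + A (i + 1)) * e i ^ 2 + κ i * e i ≤ G i i := by
    intro i hi
    have hi1 : i < q + 1 := by omega
    rcases Nat.eq_zero_or_pos i with rfl | hipos
    · have h1 : A 1 = 1 / τ 0 := hAval 0 (by omega)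
      have : (⟨0, hi1⟩ : Fin (q + 1)) = 0 := rfl
      simp only [hG, dif_pos hi1, this]
      rw [h00, hA0, h1]
      have hτ0 : τ 0 ≠ 0 := (hτ 0 (by omega)).ne'
      apply le_of_eq
      field_simp
      simp only [he]; ring
    rcases Nat.lt_or_ge i q with hilt | hige
    · have h1 : A i = 1 / τ (i - 1) := by
        simp only [hAdef]
        rw [if_pos ⟨hipos, hilt.le⟩]
      have h2 : A (i + 1) = 1 / τ i := hAval i hilt
      have := hjj ⟨i, hi1⟩ hipos hilt
      simp only [hG, dif_pos hi1]
      rw [this, h1, h2]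
      have hκe : 0 < κ i * e i := mul_pos (hκ i hi) (he_pos i hi)
      simp only [he]
      nlinarith [hκe]
    · have hiq : i = q := le_antisymm hi hige
      subst hiq
      have h1 : A i = 1 / τ (i - 1) := by
        simp only [hAdef]
        rw [if_pos ⟨hipos, le_rfl⟩]
      have h2 : A (i + 1) = 0 := by simp [hAdef]
      have hlast : (⟨i, hi1⟩ : Fin (i + 1)) = Fin.last i := rfl
      simp only [hG, dif_pos hi1, hlast]
      rw [hqq, h1, h2]
      have hτ0 : τ (i - 1) ≠ 0 := (hτ (i - 1) (by omega)).ne'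
      apply le_of_eq
      field_simp
      simp only [he]; ring
  -- quadratic form as a double sum
  have key : dotProduct (star x) (H.mulVec x)
      = ∑ i ∈ Finset.range (q + 1), ∑ j ∈ Finset.range (q + 1), X i * G i j * X j := by
    rw [dotProduct, ← Fin.sum_univ_eq_sum_range]
    apply Finset.sum_congr rfl
    intro i _
    rw [Matrix.mulVec, dotProduct, Finset.mul_sum, ← Fin.sum_univ_eq_sum_range]
    apply Finset.sum_congr rfl
    intro j _
    simp only [hX, hG, dif_pos i.isLt, dif_pos j.isLt, Fin.eta, star_trivial,
      Pi.star_apply]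
    ring
  -- some index i₀ with x i₀ ≠ 0
  obtain ⟨i₀, hi₀⟩ := Function.ne_iff.mp hx
  have hXi₀ : X (i₀ : ℕ) ≠ 0 := by
    simpa [hX, i₀.isLt, Fin.eta, Fin.is_le i₀] using hi₀
  -- the positive diagonal part
  have hpos : 0 < ∑ i ∈ Finset.range (q + 1), κ i * e i * X i ^ 2 := by
    apply Finset.sum_pos'
    · intro i hi
      have hi' : i ≤ q := by
        have := Finset.mem_range.mp hi; omega
      exact mul_nonneg (mul_nonneg (hκ i hi').le (he_pos i hi').le) (sq_nonneg _)
    · refine ⟨(i₀ : ℕ), Finset.mem_range.mpr i₀.isLt, ?_⟩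
      have hi' : (i₀ : ℕ) ≤ q := by have := i₀.isLt; omega
      exact mul_pos (mul_pos (hκ _ hi') (he_pos _ hi')) (pow_two_pos_of_ne_zero hXi₀)
  set u : ℕ → ℝ := fun i => e i * X i with hu
  calc (0 : ℝ)
      < ∑ i ∈ Finset.range (q + 1), κ i * e i * X i ^ 2 := hpos
    _ ≤ (∑ j ∈ Finset.range q, A (j + 1) * (u j + u (j + 1)) ^ 2)
          + ∑ i ∈ Finset.range (q + 1), κ i * e i * X i ^ 2 := by
        apply le_add_of_nonneg_left
        apply Finset.sum_nonneg
        intro j _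
        exact mul_nonneg (hA_nonneg _) (sq_nonneg _)
    _ = ∑ i ∈ Finset.range (q + 1),
          ((A i + A (i + 1)) * e i ^ 2 + κ i * e i) * X i ^ 2
          + 2 * ∑ j ∈ Finset.range q,
              (A (j + 1) * (e j * e (j + 1))) * X j * X (j + 1) := by
        rw [square_sum q A u hA0 hAq]
        rw [add_right_comm, ← Finset.sum_add_distrib]
        congr 1
        · apply Finset.sum_congr rfl
          intro i _
          simp only [hu]
          ring
        · rw [Finset.mul_sum, Finset.mul_sum]
          apply Finset.sum_congr rfl
          intro j _
          simp only [hu]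
          ring
    _ ≤ ∑ i ∈ Finset.range (q + 1), G i i * X i ^ 2
          + 2 * ∑ j ∈ Finset.range q, G j (j + 1) * X j * X (j + 1) := by
        apply add_le_add
        · apply Finset.sum_le_sum
          intro i hi
          have hi' : i ≤ q := by have := Finset.mem_range.mp hi; omega
          exact mul_le_mul_of_nonneg_right (hGdiag i hi') (sq_nonneg _)
        · apply le_of_eq
          congr 1
          apply Finset.sum_congr rfl
          intro j hj
          rw [hGoff j (Finset.mem_range.mp hj)]
    _ = dotProduct (star x) (H.mulVec x) := by
        rw [key, tri_sum (q + 1) G X hGz hGs]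
        norm_num
end
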